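/- arXiv:math/0502402 — 2 statements merged into one kernel-verified Lean document; each statement's English description precedes it below -/
import Mathlib

section
/- For n ≥ 2 let C_n ⊂ ℝ² be the boundary of the triangle with vertices (0,0), (1/n, 1), and (1/n,1) + 10^{-10n}·(n,−1), let X = ⋃_{n≥2} C_n, and let Y be the closure of X in ℝ². Then Y = X ∪ α where α is the line segment from (0,0) to (0,1). -/
open unitInterval Topology

noncomputable section

/-- The topological fundamental group: path components of the based loop space
(compact-open topology), with the quotient topology. -/
def piTop (Z : Type*) [TopologicalSpace Z] (z : Z) : Type _ :=
  Quotient (pathSetoid (Path z z))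

instance (Z : Type*) [TopologicalSpace Z] (z : Z) : TopologicalSpace (piTop Z z) :=
  instTopologicalSpaceQuotient

/-- The class of a loop in the topological fundamental group. -/
def piMk {Z : Type*} [TopologicalSpace Z] {z : Z} (γ : Path z z) : piTop Z z :=
  Quotient.mk _ γ

/-- The common basepoint `p = (0,0)`. -/
def pp : ℝ × ℝ := (0, 0)

/-- The apex `(1/n, 1)` of the `n`-th triangle. -/
def apex (n : ℕ) : ℝ × ℝ := (1 / (n : ℝ), 1)

/-- The third vertex `(1/n,1) + 10^{-10n}·(n,-1)` of the `n`-th triangle. -/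
def apex' (n : ℕ) : ℝ × ℝ := apex n + (((10 : ℝ) ^ (10 * n))⁻¹) • ((n : ℝ), -1)

/-- The boundary of the `n`-th triangle, i.e. the union of its three edges. -/
def Cset (n : ℕ) : Set (ℝ × ℝ) :=
  segment ℝ pp (apex n) ∪ segment ℝ (apex n) (apex' n) ∪ segment ℝ (apex' n) pp

/-- The bouquet `X = ⋃_{n ≥ 2} C_n`. -/
def Xset : Set (ℝ × ℝ) := ⋃ n ∈ {n : ℕ | 2 ≤ n}, Cset n

/-- The segment `α` from `(0,0)` to `(0,1)`. -/
def alphaSet : Set (ℝ × ℝ) := segment ℝ (0, 0) (0, 1)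

/-- The compactification `Y = X ∪ α`. -/
def Yset : Set (ℝ × ℝ) := Xset ∪ alphaSet

lemma pp_mem_C (n : ℕ) : pp ∈ Cset n := Or.inl (Or.inl (left_mem_segment ℝ _ _))

lemma pp_mem_X : pp ∈ Xset :=
  Set.mem_biUnion (by norm_num : (2 : ℕ) ∈ {n : ℕ | 2 ≤ n}) (pp_mem_C 2)

lemma X_sub_Y : Xset ⊆ Yset := Set.subset_union_left

lemma pp_mem_Y : pp ∈ Yset := X_sub_Y pp_mem_X

/-- The basepoint of `X`. -/
def pX : ↥Xset := ⟨pp, pp_mem_X⟩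

/-- The basepoint of `Y`. -/
def pY : ↥Yset := ⟨pp, pp_mem_Y⟩

/-- The inclusion `X ↪ Y` as a continuous map between subspaces. -/
def jXY : C(↥Xset, ↥Yset) := ⟨Set.inclusion X_sub_Y, continuous_inclusion X_sub_Y⟩

lemma jXY_pX : jXY pX = pY := rfl

open Filter Set

lemma isClosed_seg (x y : ℝ × ℝ) : IsClosed (segment ℝ x y) := by
  rw [segment_eq_image]
  exact (isCompact_Icc.image (by continuity)).isClosed

lemma isClosed_Cset (n : ℕ) : IsClosed (Cset n) :=
  ((isClosed_seg _ _).union (isClosed_seg _ _)).union (isClosed_seg _ _)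

lemma apex'_eq (n : ℕ) :
    apex' n = (1 / (n : ℝ) + ((10 : ℝ) ^ (10 * n))⁻¹ * n, 1 - ((10 : ℝ) ^ (10 * n))⁻¹) := by
  simp [apex', apex, Prod.ext_iff]
  ring

lemma Cset_subset_of_convex {n : ℕ} {s : Set (ℝ × ℝ)} (hs : Convex ℝ s)
    (h1 : pp ∈ s) (h2 : apex n ∈ s) (h3 : apex' n ∈ s) : Cset n ⊆ s :=
  Set.union_subset (Set.union_subset (hs.segment_subset h1 h2) (hs.segment_subset h2 h3))
    (hs.segment_subset h3 h1)

lemma inv_pow_le_one (n : ℕ) : ((10 : ℝ) ^ (10 * n))⁻¹ ≤ 1 := by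
  rw [inv_le_one_iff₀]
  right
  exact one_le_pow₀ (by norm_num)

lemma sq_le_pow (n : ℕ) : (n : ℝ) * n ≤ (10 : ℝ) ^ (10 * n) := by
  have h1 : (n : ℝ) ≤ 2 ^ n := by exact_mod_cast (Nat.lt_two_pow_self (n := n)).le
  calc (n : ℝ) * n ≤ 2 ^ n * 2 ^ n :=
        mul_le_mul h1 h1 (Nat.cast_nonneg n) (by positivity)
    _ = 4 ^ n := by rw [← mul_pow]; norm_num
    _ ≤ ((10 : ℝ) ^ 10) ^ n := pow_le_pow_left₀ (by norm_num) (by norm_num) n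
    _ = (10 : ℝ) ^ (10 * n) := by rw [← pow_mul]

lemma X_snd : Xset ⊆ Prod.snd ⁻¹' Icc (0 : ℝ) 1 := by
  intro x hx
  obtain ⟨n, hn, hx⟩ := Set.mem_iUnion₂.1 hx
  refine Cset_subset_of_convex ((convex_Icc (0:ℝ) 1).linear_preimage (LinearMap.snd ℝ ℝ ℝ)) ?_ ?_ ?_ hx
  · simp [pp]
  · simp [apex]
  · simpa [apex'_eq] using inv_pow_le_one n

lemma X_fst : Xset ⊆ Prod.fst ⁻¹' Ici (0 : ℝ) := by
  intro x hx
  obtain ⟨n, hn, hx⟩ := Set.mem_iUnion₂.1 hx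
  refine Cset_subset_of_convex ((convex_Ici (0:ℝ)).linear_preimage (LinearMap.fst ℝ ℝ ℝ)) ?_ ?_ ?_ hx
  · simp [pp]
  · simp [apex]
  · have h : (0:ℝ) ≤ 1/(n:ℝ) + ((10:ℝ)^(10*n))⁻¹ * n := by positivity
    simpa [apex'_eq] using h

lemma alpha_sub_closure : alphaSet ⊆ closure Xset := by
  rintro q ⟨a, t, ha, ht, hab, hq⟩
  have hq2 : q = ((0:ℝ), t) := by
    rw [← hq]; simp [Prod.ext_iff]
  subst hq2
  have ht1 : t ≤ 1 := by linarith
  have htd : Tendsto (fun n : ℕ => ((t / n : ℝ), t)) atTop (𝓝 ((0:ℝ), t)) :=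
    (tendsto_const_div_atTop_nhds_zero_nat t).prodMk_nhds tendsto_const_nhds
  refine mem_closure_of_tendsto htd ?_
  · filter_upwards [eventually_ge_atTop 2] with n hn
    refine Set.mem_biUnion hn (Or.inl (Or.inl ⟨1 - t, t, by linarith, ht, by ring, ?_⟩))
    simp [pp, apex, Prod.ext_iff]
    ring

/-- the closure of `X = ⋃_{n ≥ 2} C_n` in `ℝ²` is `X ∪ α`, where
`α` is the segment from `(0,0)` to `(0,1)`. -/
theorem closure_Xset_eq : closure Xset = Xset ∪ alphaSet := by
  apply Set.Subset.antisymm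
  · intro q hq
    have hq1 : 0 ≤ q.1 :=
      closure_minimal X_fst (isClosed_Ici.preimage continuous_fst) hq
    rcases eq_or_lt_of_le hq1 with h0 | h0
    · right
      have h2 : q.2 ∈ Icc (0:ℝ) 1 :=
        closure_minimal X_snd (isClosed_Icc.preimage continuous_snd) hq
      refine ⟨1 - q.2, q.2, by linarith [h2.2], h2.1, by ring, ?_⟩
      simp [Prod.ext_iff, ← h0]
    · left
      set c := q.1 with hc
      set N := ⌈(4:ℝ)/c⌉₊ with hN
      set F := ⋃ n ∈ Finset.Ico 2 N, Cset n with hF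
      set G := {y : ℝ × ℝ | y.1 ≤ c / 2} with hG
      have hXFG : Xset ⊆ F ∪ G := by
        intro x hx
        obtain ⟨n, hn, hx⟩ := Set.mem_iUnion₂.1 hx
        by_cases hnN : n < N
        · exact Or.inl (Set.mem_biUnion (Finset.mem_Ico.2 ⟨hn, hnN⟩) hx)
        · right
          push_neg at hnN
          have hn0 : (0:ℝ) < n := by
            exact_mod_cast Nat.lt_of_lt_of_le (by norm_num : 0 < 2) hn
          have h4c : (4:ℝ)/c ≤ n := le_trans (Nat.le_ceil _) (by exact_mod_cast hnN)
          have h2n : (2:ℝ)/n ≤ c/2 := by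
            rw [div_le_div_iff₀ hn0 (by norm_num)]
            rw [div_le_iff₀ h0] at h4c
            linarith
          have hinv : ((10:ℝ) ^ (10*n))⁻¹ * n ≤ 1/n := by
            rw [inv_mul_eq_div, div_le_div_iff₀ (by positivity) hn0]
            simpa using sq_le_pow n
          have h1n : (1:ℝ)/n ≤ c/2 := le_trans (by rw [div_le_div_iff₀ hn0 hn0]; nlinarith) h2n
          refine Cset_subset_of_convex ((convex_Iic (c/2)).linear_preimage (LinearMap.fst ℝ ℝ ℝ)) ?_ ?_ ?_ hx
          · simp [pp, hG]; linarith
          · simpa [apex, hG] using h1n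
          · simp [apex'_eq, hG]
            have e : ((n:ℝ))⁻¹ = 1/(n:ℝ) := (one_div _).symm
            rw [e]
            have h2 : (2:ℝ)/n = 1/n + 1/n := by ring
            rw [h2] at h2n
            linarith
      have hclF : IsClosed F :=
        Set.Finite.isClosed_biUnion (Finset.Ico 2 N).finite_toSet (fun n _ => isClosed_Cset n)
      have hclG : IsClosed G := isClosed_le continuous_fst continuous_const
      have := closure_minimal hXFG (hclF.union hclG) hq
      rcases this with h | h
      · obtain ⟨n, hn, hqn⟩ := Set.mem_iUnion₂.1 h
        exact Set.mem_biUnion (Finset.mem_Ico.1 hn).1 hqn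
      · exact absurd h (by simp [hG]; linarith)
  · exact Set.union_subset subset_closure alpha_sub_closure
end
end

section
/- Let X = ⋃_{n≥2} C_n be the bouquet of triangle boundaries C_n (vertices (0,0), (1/n,1), (1/n,1) + 10^{-10n}(n,−1)) with common point p = (0,0), let α be the segment from (0,0) to (0,1), and Y = X ∪ α. If f : ∂D² → X is a loop with f(1) = p that extends to a continuous map F : D² → Y, then f also extends to a continuous map G : D² → X. Consequently the inclusion-induced homomorphism j* : π₁(X,p) → π₁(Y,p) is injective. -/
open unitInterval Topology

noncomputable section

lemma basept_mem_disk : ((1 : ℝ), (0 : ℝ)) ∈ Metric.closedBall (0 : ℝ × ℝ) 1 := by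
  rw [Metric.mem_closedBall]
  simp [Prod.dist_eq]

/-! ### basic algebra -/

/-- the linear functional `x + y` -/
def LL (v : ℝ × ℝ) : ℝ := v.1 + v.2
/-- the "angle" coordinate `x / (x+y)` -/
def th (v : ℝ × ℝ) : ℝ := v.1 / (v.1 + v.2)
/-- the angle of the third vertex of the `n`-th triangle -/
def thA (n : ℕ) : ℝ := th (apex' n)
/-- shorthand for `10 ^ (-10 n)` -/
def en (n : ℕ) : ℝ := ((10 : ℝ) ^ (10 * n))⁻¹

lemma en_pos (n : ℕ) : 0 < en n := by unfold en; positivity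

lemma en_le_one (n : ℕ) : en n ≤ 1 := by
  rw [en, inv_le_one_iff₀]
  right
  exact one_le_pow₀ (by norm_num)

lemma cube_lt (n : ℕ) (hn : 2 ≤ n) : ((n : ℝ)) ^ 3 < (10 : ℝ) ^ (10 * n) := by
  have h1 : n ^ 3 < 10 ^ (10 * n) := by
    calc n ^ 3 < (2 ^ n) ^ 3 := by
          exact Nat.pow_lt_pow_left (Nat.lt_two_pow_self) (by norm_num)
      _ = 2 ^ (3 * n) := by rw [← pow_mul, Nat.mul_comm]
      _ ≤ 10 ^ (10 * n) := Nat.pow_le_pow_left (by norm_num) (3 * n) |>.trans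
          (Nat.pow_le_pow_right (by norm_num) (by omega))
  calc ((n : ℝ)) ^ 3 = ((n ^ 3 : ℕ) : ℝ) := by push_cast; ring
    _ < ((10 ^ (10 * n) : ℕ) : ℝ) := by exact_mod_cast h1
    _ = (10 : ℝ) ^ (10 * n) := by push_cast; ring

lemma apex'_coords (n : ℕ) : apex' n = (1 / (n : ℝ) + en n * n, 1 - en n) := by
  simp only [apex', apex, en, Prod.smul_mk, smul_eq_mul, Prod.mk_add_mk]
  norm_num
  ring

lemma apex_pos (n : ℕ) (hn : 2 ≤ n) : 0 < LL (apex n) := by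
  have : (0:ℝ) < (n:ℝ) := by exact_mod_cast Nat.lt_of_lt_of_le (by norm_num) hn
  simp only [LL, apex]
  positivity

lemma apex'_pos (n : ℕ) (hn : 2 ≤ n) : 0 < LL (apex' n) := by
  have hN : (0:ℝ) < (n:ℝ) := by exact_mod_cast Nat.lt_of_lt_of_le (by norm_num) hn
  rw [apex'_coords]
  have h1 := en_pos n
  have h2 := en_le_one n
  simp only [LL]
  have : 0 < 1 / (n:ℝ) := by positivity
  nlinarith [mul_nonneg (le_of_lt h1) (le_of_lt hN)]

lemma th_apex (n : ℕ) (hn : 2 ≤ n) : th (apex n) = 1 / ((n : ℝ) + 1) := by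
  have hN : (0:ℝ) < (n:ℝ) := by exact_mod_cast Nat.lt_of_lt_of_le (by norm_num) hn
  simp only [th, apex]
  field_simp
  ring

lemma thA_lower (n : ℕ) (hn : 2 ≤ n) : 1 / ((n : ℝ) + 1) ≤ thA n := by
  have hN : (0:ℝ) < (n:ℝ) := by exact_mod_cast Nat.lt_of_lt_of_le (by norm_num) hn
  have hL := apex'_pos n hn
  rw [apex'_coords] at hL
  simp only [LL] at hL
  have h1 := en_pos n
  rw [thA, apex'_coords, th]
  dsimp only
  rw [div_le_div_iff₀ (by positivity) (by linarith)]
  have h0 : 0 < 1 / (n:ℝ) := by positivity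
  have hinv : 1 / (n:ℝ) * (n:ℝ) = 1 := by field_simp
  nlinarith [hinv, mul_nonneg h1.le (mul_nonneg hN.le hN.le), h1.le]

lemma thA_upper (n : ℕ) (hn : 2 ≤ n) : thA n < 1 / (n : ℝ) := by
  have hN : (0:ℝ) < (n:ℝ) := by exact_mod_cast Nat.lt_of_lt_of_le (by norm_num) hn
  have hL := apex'_pos n hn
  rw [apex'_coords] at hL
  simp only [LL] at hL
  have h1 := en_pos n
  have hcube := cube_lt n hn
  have hkey : en n * ((n:ℝ)^3 - (n:ℝ)^2 + (n:ℝ)) < 1 := by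
    have h10 : (0:ℝ) < (10:ℝ)^(10*n) := by positivity
    have : en n * (10:ℝ)^(10*n) = 1 := by rw [en]; field_simp
    have hN2 : (2:ℝ) ≤ (n:ℝ) := by exact_mod_cast hn
    have hle : (n:ℝ)^3 - (n:ℝ)^2 + (n:ℝ) ≤ (n:ℝ)^3 := by nlinarith [hN2]
    calc en n * ((n:ℝ)^3 - (n:ℝ)^2 + (n:ℝ)) ≤ en n * (n:ℝ)^3 :=
          mul_le_mul_of_nonneg_left hle h1.le
      _ < en n * (10:ℝ)^(10*n) := by
          apply mul_lt_mul_of_pos_left hcube h1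
      _ = 1 := this
  rw [thA, apex'_coords, th]
  dsimp only
  rw [div_lt_div_iff₀ (by linarith) hN]
  have h0 : 1 / (n:ℝ) * (n:ℝ) = 1 := by field_simp
  nlinarith [hkey, h0, hN, mul_pos h1 hN]

lemma thA_pos (n : ℕ) (hn : 2 ≤ n) : 0 < thA n := by
  have hN : (0:ℝ) < (n:ℝ) := by exact_mod_cast Nat.lt_of_lt_of_le (by norm_num) hn
  calc (0:ℝ) < 1 / ((n:ℝ)+1) := by positivity
    _ ≤ thA n := thA_lower n hn

/-! ### membership elimination -/

lemma pp_eq_zero : pp = (0 : ℝ × ℝ) := rfl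

lemma LL_pp : LL pp = 0 := by simp [LL, pp]

lemma seg_from_pp {b y : ℝ × ℝ} (hy : y ∈ segment ℝ pp b) :
    y = pp ∨ ∃ v : ℝ, 0 < v ∧ v ≤ 1 ∧ y = v • b := by
  obtain ⟨u, v, hu, hv, huv, rfl⟩ := hy
  rcases eq_or_lt_of_le hv with hv0 | hv0
  · left; rw [pp_eq_zero, ← hv0]; simp
  · right
    exact ⟨v, hv0, by linarith, by rw [pp_eq_zero]; simp⟩

lemma th_smul {b : ℝ × ℝ} {v : ℝ} (hv : 0 < v) : th (v • b) = th b := by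
  simp only [th, Prod.smul_fst, Prod.smul_snd, smul_eq_mul]
  rw [← mul_add, mul_div_mul_left _ _ (ne_of_gt hv)]

lemma LL_smul (b : ℝ × ℝ) (v : ℝ) : LL (v • b) = v * LL b := by
  simp only [LL, Prod.smul_fst, Prod.smul_snd, smul_eq_mul]; ring

lemma th_seg {a b y : ℝ × ℝ} (ha : 0 < LL a) (hb : 0 < LL b) (hab : th a ≤ th b)
    (hy : y ∈ segment ℝ a b) : 0 < LL y ∧ th a ≤ th y ∧ th y ≤ th b := by
  obtain ⟨u, v, hu, hv, huv, rfl⟩ := hy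
  have hL1 : LL a = a.1 + a.2 := rfl
  have hL2 : LL b = b.1 + b.2 := rfl
  have hLy : LL (u • a + v • b) = u * LL a + v * LL b := by
    simp only [LL, Prod.fst_add, Prod.snd_add, Prod.smul_fst, Prod.smul_snd, smul_eq_mul]
    ring
  have hy1 : (u • a + v • b).1 = u * a.1 + v * b.1 := by
    simp only [Prod.fst_add, Prod.smul_fst, smul_eq_mul]
  have hLpos : 0 < LL (u • a + v • b) := by
    rw [hLy]
    rcases lt_or_eq_of_le hu with hu' | hu'
    · nlinarith [mul_pos hu' ha, mul_nonneg hv hb.le]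
    · have hv1 : v = 1 := by linarith
      rw [← hu', hv1]; simpa using hb
  have hcross : a.1 * LL b ≤ b.1 * LL a := by
    rw [th, th, ← hL1, ← hL2, div_le_div_iff₀ ha hb] at hab
    exact hab
  refine ⟨hLpos, ?_, ?_⟩
  · rw [th, th, ← hL1, ← (by rfl : LL (u • a + v • b) = (u • a + v • b).1 + (u • a + v • b).2),
      div_le_div_iff₀ ha hLpos, hy1, hLy]
    nlinarith [mul_nonneg hv (sub_nonneg.mpr hcross)]
  · rw [th, th, ← hL2, ← (by rfl : LL (u • a + v • b) = (u • a + v • b).1 + (u • a + v • b).2),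
      div_le_div_iff₀ hLpos hb, hy1, hLy]
    nlinarith [mul_nonneg hu (sub_nonneg.mpr hcross)]

lemma C_elim {n : ℕ} (hn : 2 ≤ n) {y : ℝ × ℝ} (hy : y ∈ Cset n) :
    y = pp ∨ (0 < LL y ∧ 1 / ((n : ℝ) + 1) ≤ th y ∧ th y ≤ thA n) := by
  rcases hy with (hy | hy) | hy
  · rcases seg_from_pp hy with h | ⟨v, hv, _, rfl⟩
    · exact Or.inl h
    · right
      rw [LL_smul, th_smul hv, th_apex n hn]
      exact ⟨mul_pos hv (apex_pos n hn), le_refl _, thA_lower n hn⟩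
  · right
    have hab : th (apex n) ≤ th (apex' n) := by
      rw [th_apex n hn]; exact thA_lower n hn
    obtain ⟨h1, h2, h3⟩ := th_seg (apex_pos n hn) (apex'_pos n hn) hab hy
    rw [th_apex n hn] at h2
    exact ⟨h1, h2, h3⟩
  · rw [segment_symm] at hy
    rcases seg_from_pp hy with h | ⟨v, hv, _, rfl⟩
    · exact Or.inl h
    · right
      rw [LL_smul, th_smul hv]
      exact ⟨mul_pos hv (apex'_pos n hn), thA_lower n hn, le_refl _⟩

lemma alpha_elim {y : ℝ × ℝ} (hy : y ∈ alphaSet) : y = pp ∨ (0 < LL y ∧ th y = 0) := by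
  have : y ∈ segment ℝ pp ((0:ℝ), (1:ℝ)) := hy
  rcases seg_from_pp this with h | ⟨v, hv, _, rfl⟩
  · exact Or.inl h
  · right
    constructor
    · rw [LL_smul]; simp only [LL]; simpa using hv
    · rw [th_smul hv]; simp [th]

lemma X_elim {y : ℝ × ℝ} (hy : y ∈ Xset) : ∃ n, 2 ≤ n ∧ y ∈ Cset n := by
  simp only [Xset, Set.mem_iUnion, Set.mem_setOf_eq] at hy
  obtain ⟨n, hn, hy⟩ := hy
  exact ⟨n, hn, hy⟩

lemma Cset_sub_X {n : ℕ} (hn : 2 ≤ n) : Cset n ⊆ Xset := fun y hy =>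
  Set.mem_biUnion hn hy

lemma LL_pos_of_Y {y : ℝ × ℝ} (hy : y ∈ Yset) (hyp : y ≠ pp) : 0 < LL y := by
  rcases hy with hy | hy
  · obtain ⟨n, hn, hy⟩ := X_elim hy
    rcases C_elim hn hy with h | h
    · exact absurd h hyp
    · exact h.1
  · rcases alpha_elim hy with h | h
    · exact absurd h hyp
    · exact h.1

/-! ### angle characterization of the triangles inside `Y` -/

lemma th_C_forward {n : ℕ} (hn : 2 ≤ n) {y : ℝ × ℝ} (hy : y ∈ Cset n) (hyp : y ≠ pp) :
    thA (n + 1) < th y ∧ th y < 1 / (n : ℝ) := by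
  rcases C_elim hn hy with h | ⟨_, h1, h2⟩
  · exact absurd h hyp
  have hup : thA (n + 1) < 1 / ((n : ℝ) + 1) := by
    have := thA_upper (n + 1) (by omega)
    rwa [Nat.cast_add, Nat.cast_one] at this
  exact ⟨lt_of_lt_of_le hup h1, lt_of_le_of_lt h2 (thA_upper n hn)⟩

lemma th_C_backward {n : ℕ} (hn : 2 ≤ n) {y : ℝ × ℝ} (hy : y ∈ Yset) (hyp : y ≠ pp)
    (h1 : thA (n + 1) < th y) (h2 : th y < 1 / (n : ℝ)) : y ∈ Cset n := by
  rcases hy with hy | hy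
  · obtain ⟨m, hm, hym⟩ := X_elim hy
    rcases C_elim hm hym with h | ⟨_, hm1, hm2⟩
    · exact absurd h hyp
    rcases lt_trichotomy m n with hmn | hmn | hmn
    · exfalso
      have hcast : (m : ℝ) + 1 ≤ (n : ℝ) := by exact_mod_cast Nat.succ_le_of_lt hmn
      have : 1 / (n : ℝ) ≤ 1 / ((m : ℝ) + 1) :=
        one_div_le_one_div_of_le (by positivity) hcast
      linarith
    · rwa [hmn] at hym
    · exfalso
      rcases eq_or_lt_of_le (Nat.succ_le_of_lt hmn) with hm1' | hm1'
      · rw [← hm1'] at hm2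
        linarith
      · have hA : thA m < 1 / (m : ℝ) := thA_upper m (by omega)
        have hB : 1 / ((n : ℝ) + 1 + 1) ≤ thA (n + 1) := by
          have := thA_lower (n + 1) (by omega)
          rwa [Nat.cast_add, Nat.cast_one] at this
        have hcast : (n : ℝ) + 1 + 1 ≤ (m : ℝ) := by
          have h' : ((n + 2 : ℕ) : ℝ) ≤ (m : ℝ) := Nat.cast_le.mpr (by omega)
          push_cast at h'
          linarith
        have : 1 / (m : ℝ) ≤ 1 / ((n : ℝ) + 1 + 1) :=
          one_div_le_one_div_of_le (by positivity) hcast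
        linarith
  · exfalso
    rcases alpha_elim hy with h | ⟨_, h0⟩
    · exact absurd h hyp
    have := thA_pos (n + 1) (by omega)
    rw [h0] at h1
    linarith

/-! ### paths in `Y` avoiding `p` cannot travel from `α` into `X` -/

lemma th_continuousAt {y : ℝ × ℝ} (h : LL y ≠ 0) : ContinuousAt th y := by
  have : ContinuousAt (fun v : ℝ × ℝ => v.1 + v.2) y := by fun_prop
  exact ContinuousAt.div continuousAt_fst this h

lemma path_stays {f : I → ℝ × ℝ} (hf : Continuous f) (hY : ∀ t, f t ∈ Yset)
    (hp : ∀ t, f t ≠ pp) (h0 : f 0 ∈ alphaSet) : ∀ t, f t ∉ Xset := by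
  intro t₁ ht₁
  obtain ⟨n, hn, hC⟩ := X_elim ht₁
  have hth : Continuous fun t => th (f t) := by
    rw [continuous_iff_continuousAt]
    intro t
    exact (th_continuousAt (ne_of_gt (LL_pos_of_Y (hY t) (hp t)))).comp hf.continuousAt
  set S : Set I := {t | f t ∈ Cset n} with hS
  have hSopen : IsOpen S := by
    have : S = (fun t => th (f t)) ⁻¹' (Set.Ioo (thA (n + 1)) (1 / (n : ℝ))) := by
      ext t
      simp only [hS, Set.mem_setOf_eq, Set.mem_preimage, Set.mem_Ioo]
      constructor
      · intro h; exact th_C_forward hn h (hp t)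
      · intro h; exact th_C_backward hn (hY t) (hp t) h.1 h.2
    rw [this]
    exact isOpen_Ioo.preimage hth
  have hSclosed : IsClosed S := by
    have : S = (fun t => th (f t)) ⁻¹' (Set.Icc (1 / ((n : ℝ) + 1)) (thA n)) := by
      ext t
      simp only [hS, Set.mem_setOf_eq, Set.mem_preimage, Set.mem_Icc]
      constructor
      · intro h
        rcases C_elim hn h with h' | ⟨_, h1, h2⟩
        · exact absurd h' (hp t)
        · exact ⟨h1, h2⟩
      · intro h
        apply th_C_backward hn (hY t) (hp t)
        · have hup : thA (n + 1) < 1 / ((n : ℝ) + 1) := by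
            have := thA_upper (n + 1) (by omega)
            rwa [Nat.cast_add, Nat.cast_one] at this
          linarith [h.1]
        · linarith [h.2, thA_upper n hn]
    rw [this]
    exact isClosed_Icc.preimage hth
  have hne : S.Nonempty := ⟨t₁, hC⟩
  have : S = Set.univ := by
    rcases isClopen_iff.mp ⟨hSclosed, hSopen⟩ with h | h
    · exact absurd hne (by rw [h]; exact Set.not_nonempty_empty)
    · exact h
  have h0C : f 0 ∈ Cset n := Set.eq_univ_iff_forall.mp this 0
  rcases alpha_elim h0 with h | ⟨_, hth0⟩
  · exact hp 0 h
  rcases C_elim hn h0C with h | ⟨_, h1, _⟩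
  · exact hp 0 h
  rw [hth0] at h1
  have : (0:ℝ) < (n:ℝ) := by exact_mod_cast Nat.lt_of_lt_of_le (by norm_num) hn
  have : (0:ℝ) < 1 / ((n : ℝ) + 1) := by positivity
  linarith

/-! ### the redefined map -/

variable {Z : Type*} [TopologicalSpace Z]

/-- Redefine a map into `Y` to send everything outside `X` (i.e. in `α \ {p}`) to `p`. -/
def mkG (F : Z → ℝ × ℝ) (z : Z) : ℝ × ℝ :=
  @ite _ (F z ∈ Xset) (Classical.propDecidable _) (F z) pp

lemma mkG_mem (F : Z → ℝ × ℝ) (z : Z) : mkG F z ∈ Xset := by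
  unfold mkG; split
  · assumption
  · exact pp_mem_X

lemma mkG_eq_of_mem {F : Z → ℝ × ℝ} {z : Z} (h : F z ∈ Xset) : mkG F z = F z := if_pos h

lemma mkG_eq_pp_of_not_mem {F : Z → ℝ × ℝ} {z : Z} (h : F z ∉ Xset) : mkG F z = pp := if_neg h

lemma LL_continuous : Continuous LL := by unfold LL; fun_prop

lemma mkG_continuous [LocallyPathConnectedSpace Z] (F : C(Z, ℝ × ℝ)) (hF : ∀ z, F z ∈ Yset) :
    Continuous (mkG F) := by
  rw [continuous_iff_continuousAt]
  intro z
  by_cases hppz : F z = pp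
  · -- near a point mapping to `p`, squeeze
    have hval : mkG F z = pp := by
      unfold mkG; split
      · exact hppz
      · rfl
    have key : ∀ w, dist (mkG F w) pp ≤ dist (F w) pp := by
      intro w
      unfold mkG; split
      · exact le_refl _
      · simp [dist_self, dist_nonneg]
    rw [ContinuousAt, hval, Metric.tendsto_nhds]
    intro ε hε
    have hcont : Filter.Tendsto F (𝓝 z) (𝓝 pp) := by
      have := F.continuous.continuousAt (x := z)
      rwa [ContinuousAt, hppz] at this
    filter_upwards [Metric.tendsto_nhds.mp hcont ε hε] with w hw
    exact lt_of_le_of_lt (key w) hw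
  by_cases hX : F z ∈ Xset
  · -- near a point of `X \ {p}`, `F` stays in `X`, so `mkG F = F`
    obtain ⟨n, hn, hC⟩ := X_elim hX
    have hLL : 0 < LL (F z) := LL_pos_of_Y (hF z) hppz
    obtain ⟨hth1, hth2⟩ := th_C_forward hn hC hppz
    have hV : {w | F w ∈ Cset n} ∈ 𝓝 z := by
      have m1 : LL ⁻¹' Set.Ioi 0 ∈ 𝓝 (F z) :=
        LL_continuous.continuousAt.preimage_mem_nhds (isOpen_Ioi.mem_nhds hLL)
      have m2 : th ⁻¹' Set.Ioo (thA (n + 1)) (1 / (n : ℝ)) ∈ 𝓝 (F z) :=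
        (th_continuousAt (ne_of_gt hLL)).preimage_mem_nhds
          (isOpen_Ioo.mem_nhds ⟨hth1, hth2⟩)
      have := F.continuous.continuousAt.preimage_mem_nhds (Filter.inter_mem m1 m2)
      apply Filter.mem_of_superset this
      rintro w ⟨hw1, hw2⟩
      have hwne : F w ≠ pp := by
        intro h
        rw [h] at hw1
        simp only [Set.mem_preimage, Set.mem_Ioi, LL_pp] at hw1
        exact lt_irrefl 0 hw1
      exact th_C_backward hn (hF w) hwne hw2.1 hw2.2
    apply F.continuous.continuousAt.congr
    filter_upwards [hV] with w hw
    exact (mkG_eq_of_mem (Cset_sub_X hn hw)).symm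
  · -- near a point of `α \ {p}`, `F` stays in `α \ {p}`, so `mkG F = p`
    have halpha : F z ∈ alphaSet := by
      rcases hF z with h | h
      · exact absurd h hX
      · exact h
    have hWopen : IsOpen (F ⁻¹' {pp}ᶜ) := (isClosed_singleton.isOpen_compl).preimage F.continuous
    have hzW : z ∈ F ⁻¹' {pp}ᶜ := by simpa using hppz
    obtain ⟨N, hNmem, hNpc, hNsub⟩ := (pathConnected_subset_basis hWopen hzW).ex_mem
    have hnotX : ∀ w ∈ N, F w ∉ Xset := by
      intro w hw hXw
      obtain ⟨γ, hγ⟩ := hNpc.joinedIn z (mem_of_mem_nhds hNmem) w hw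
      have hstay := path_stays (f := fun t => F (γ t))
        (F.continuous.comp γ.continuous) (fun t => hF _)
        (fun t => by simpa using hNsub (hγ t))
        (by show F (γ 0) ∈ alphaSet; rw [γ.source]; exact halpha)
      have h1 : F (γ 1) ∉ Xset := hstay 1
      rw [γ.target] at h1
      exact h1 hXw
    apply Filter.EventuallyEq.continuousAt (y := pp)
    filter_upwards [hNmem] with w hw
    exact mkG_eq_pp_of_not_mem (hnotX w hw)

/-! ### local path-connectedness instances -/

lemma Convex.locPathConnectedSpace' {E : Type*} [NormedAddCommGroup E] [NormedSpace ℝ E]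
    {s : Set E} (hs : Convex ℝ s) : LocallyPathConnectedSpace ↥s := by
  apply LocPathConnectedSpace.of_bases
    (p := fun (x : ↥s) (ε : ℝ) => 0 < ε)
    (s := fun (x : ↥s) (ε : ℝ) => Subtype.val ⁻¹' Metric.ball (x : E) ε)
  · intro x
    rw [nhds_induced]
    exact Metric.nhds_basis_ball.comap _
  · intro x ε hε
    rw [Topology.IsInducing.subtypeVal.isPathConnected_iff,
      Subtype.image_preimage_coe]
    exact (hs.inter (convex_ball _ _)).isPathConnected
      ⟨x, x.2, Metric.mem_ball_self hε⟩

instance : LocallyPathConnectedSpace I := Convex.locPathConnectedSpace' (convex_Icc 0 1)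

instance : LocallyPathConnectedSpace ↥(Metric.closedBall (0 : ℝ × ℝ) 1) :=
  Convex.locPathConnectedSpace' (convex_closedBall _ _)

instance LocPathConnectedSpace.prod {A B : Type*} [TopologicalSpace A] [TopologicalSpace B]
    [LocallyPathConnectedSpace A] [LocallyPathConnectedSpace B] : LocallyPathConnectedSpace (A × B) := by
  apply LocPathConnectedSpace.of_bases
    (p := fun (x : A × B) (st : Set A × Set B) =>
      (st.1 ∈ 𝓝 x.1 ∧ IsPathConnected st.1) ∧ (st.2 ∈ 𝓝 x.2 ∧ IsPathConnected st.2))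
    (s := fun (x : A × B) (st : Set A × Set B) => st.1 ×ˢ st.2)
  · intro x
    rw [nhds_prod_eq]
    exact (path_connected_basis x.1).prod (path_connected_basis x.2)
  · rintro x ⟨s, t⟩ ⟨⟨hs, hspc⟩, ⟨ht, htpc⟩⟩
    obtain ⟨a, ha, hja⟩ := hspc
    obtain ⟨b, hb, hjb⟩ := htpc
    refine ⟨(a, b), ⟨ha, hb⟩, ?_⟩
    rintro ⟨c, d⟩ ⟨hc, hd⟩
    obtain ⟨γ₁, hγ₁⟩ := hja hc
    obtain ⟨γ₂, hγ₂⟩ := hjb hd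
    exact ⟨γ₁.prod γ₂, fun τ => ⟨hγ₁ τ, hγ₂ τ⟩⟩

/-- a loop in `X` based at `p` that bounds a disk in `Y` already
bounds a disk in `X`; consequently the inclusion-induced homomorphism
`j* : π₁(X,p) → π₁(Y,p)` is injective. -/
theorem disk_in_Y_gives_disk_in_X_and_injectivity :
    (∀ F : C(↥(Metric.closedBall (0 : ℝ × ℝ) 1), ℝ × ℝ),
      (∀ z, F z ∈ Yset) →
      (∀ z : ↥(Metric.closedBall (0 : ℝ × ℝ) 1),
        (z : ℝ × ℝ) ∈ Metric.sphere (0 : ℝ × ℝ) 1 → F z ∈ Xset) →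
      F ⟨(1, 0), basept_mem_disk⟩ = pp →
      ∃ G : C(↥(Metric.closedBall (0 : ℝ × ℝ) 1), ℝ × ℝ),
        (∀ z, G z ∈ Xset) ∧
        ∀ z : ↥(Metric.closedBall (0 : ℝ × ℝ) 1),
          (z : ℝ × ℝ) ∈ Metric.sphere (0 : ℝ × ℝ) 1 → G z = F z) ∧
    (∀ a b : Path pX pX,
      Joined (a.map jXY.continuous) (b.map jXY.continuous) → Joined a b) := by
  constructor
  · intro F hY hb _
    refine ⟨⟨mkG F, mkG_continuous F hY⟩, fun z => mkG_mem F z, fun z hz => ?_⟩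
    exact mkG_eq_of_mem (hb z hz)
  · intro a b hJ
    obtain ⟨Γ⟩ := hJ
    -- the homotopy as a continuous map on the square
    let q : C(I, C(I, ↥Yset)) :=
      ⟨fun s => (Γ s : Path pY pY).toContinuousMap,
        continuous_induced_dom.comp Γ.continuous⟩
    let Fc : C(I × I, ↥Yset) := q.uncurry
    let F : C(I × I, ℝ × ℝ) := ⟨fun z => (Fc z : ℝ × ℝ), continuous_subtype_val.comp Fc.continuous⟩
    have hF : ∀ z, F z ∈ Yset := fun z => (Fc z).2
    have hGc : Continuous (mkG F) := mkG_continuous F hF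
    have e0 : ∀ s : I, F (s, 0) = pp := by
      intro s
      show ((Γ s : Path pY pY) 0 : ℝ × ℝ) = pp
      rw [(Γ s).source]
      rfl
    have e1 : ∀ s : I, F (s, 1) = pp := by
      intro s
      show ((Γ s : Path pY pY) 1 : ℝ × ℝ) = pp
      rw [(Γ s).target]
      rfl
    have ea : ∀ t : I, F (0, t) = ((a t : ↥Xset) : ℝ × ℝ) := by
      intro t
      show ((Γ 0 : Path pY pY) t : ℝ × ℝ) = _
      rw [Γ.source]
      rfl
    have eb : ∀ t : I, F (1, t) = ((b t : ↥Xset) : ℝ × ℝ) := by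
      intro t
      show ((Γ 1 : Path pY pY) t : ℝ × ℝ) = _
      rw [Γ.target]
      rfl
    let Gc : C(I × I, ↥Xset) := ⟨fun z => ⟨mkG F z, mkG_mem F z⟩, hGc.subtype_mk _⟩
    let g : I → Path pX pX := fun s =>
      { toContinuousMap := Gc.curry s
        source' := by
          show (⟨mkG F (s, 0), _⟩ : ↥Xset) = pX
          apply Subtype.ext
          show mkG F (s, 0) = pp
          rw [mkG_eq_of_mem (by rw [e0 s]; exact pp_mem_X), e0 s]
        target' := by
          show (⟨mkG F (s, 1), _⟩ : ↥Xset) = pX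
          apply Subtype.ext
          show mkG F (s, 1) = pp
          rw [mkG_eq_of_mem (by rw [e1 s]; exact pp_mem_X), e1 s] }
    have hg : Continuous g := by
      apply continuous_induced_rng.mpr
      exact Gc.curry.continuous
    have hg0 : g 0 = a := by
      apply Path.ext
      funext t
      apply Subtype.ext
      show mkG F (0, t) = ((a t : ↥Xset) : ℝ × ℝ)
      rw [mkG_eq_of_mem (by rw [ea t]; exact (a t).2), ea t]
    have hg1 : g 1 = b := by
      apply Path.ext
      funext t
      apply Subtype.ext
      show mkG F (1, t) = ((b t : ↥Xset) : ℝ × ℝ)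
      rw [mkG_eq_of_mem (by rw [eb t]; exact (b t).2), eb t]
    exact ⟨{ toFun := g, continuous_toFun := hg, source' := hg0, target' := hg1 }⟩
end
end
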